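/- Under the hypotheses of the kOPA optimality theorem (w̃ optimal over 𝒮 = {a₁,…,a_k}, s̃ = ∑ w̃ᵢ zᵢ ≠ 0, δ = arg s̃), no e^{-iδ} zᵢ lies on the common boundary of two cones: there do not exist i and indices j ≠ l such that Re((aⱼ - aₘ) e^{-iδ} zᵢ) ≥ 0 for all m ≠ j and Re((a_l - aₘ) e^{-iδ} zᵢ) ≥ 0 for all m ≠ l. -/

import Mathlib

theorem stmt9 (n k : ℕ) (z : Fin n → ℂ) (hz : ∀ i, z i ≠ 0)
    (a : Fin k → ℂ) (ha : Function.Injective a)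
    (w : Fin n → ℂ) (hw : ∀ i, ∃ j, w i = a j)
    (hopt : ∀ v : Fin n → ℂ, (∀ i, ∃ j, v i = a j) →
      ‖∑ i, v i * z i‖ ≤ ‖∑ i, w i * z i‖)
    (hs : (∑ i, w i * z i) ≠ 0) :
    ¬ ∃ (i : Fin n) (j l : Fin k), j ≠ l ∧
      (∀ m, m ≠ j →
        0 ≤ ((a j - a m) *
          ((starRingEnd ℂ) (∑ i, w i * z i) / ((‖∑ i, w i * z i‖ : ℝ) : ℂ)) *
          z i).re) ∧
      (∀ m, m ≠ l →
        0 ≤ ((a l - a m) *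
          ((starRingEnd ℂ) (∑ i, w i * z i) / ((‖∑ i, w i * z i‖ : ℝ) : ℂ)) *
          z i).re) := by
  rintro ⟨i, j, l, hjl, hj, hl⟩
  set s : ℂ := ∑ i, w i * z i with hsdef
  set u : ℂ := (starRingEnd ℂ) s / ((‖s‖ : ℝ) : ℂ) with hud
  have habs : ‖s‖ ≠ 0 := by simpa using hs
  have habsu : ‖u‖ = 1 := by
    rw [hud, norm_div, Complex.norm_conj, Complex.norm_real, Real.norm_eq_abs,
      abs_of_nonneg (norm_nonneg s), div_self habs]
  have hune : u ≠ 0 := by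
    intro h; rw [h] at habsu; simp at habsu
  have hus : u * s = ((‖s‖ : ℝ) : ℂ) := by
    rw [hud, div_mul_eq_mul_div, mul_comm, Complex.mul_conj]
    rw [Complex.normSq_eq_norm_sq]
    push_cast
    rw [sq]
    field_simp
  -- key claim
  have key : ∀ j' : Fin k,
      (∀ m, m ≠ j' → 0 ≤ ((a j' - a m) * u * z i).re) → w i = a j' := by
    intro j' hj'
    obtain ⟨m0, hm0⟩ := hw i
    set c : ℂ := (a j' - a m0) * z i with hcd
    have hRe : 0 ≤ (u * c).re := by
      by_cases h : m0 = j'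
      · simp [hcd, h]
      · have := hj' m0 h
        have e : (a j' - a m0) * u * z i = u * c := by rw [hcd]; ring
        rwa [e] at this
    set v : Fin n → ℂ := Function.update w i (a j') with hvd
    have hv : ∀ i', ∃ j'', v i' = a j'' := by
      intro i'
      by_cases h : i' = i
      · exact ⟨j', by simp [hvd, h]⟩
      · obtain ⟨j'', hj''⟩ := hw i'
        exact ⟨j'', by simpa [hvd, Function.update_of_ne h] using hj''⟩
    have ht : ∑ i', v i' * z i' = s + c := by
      have : ∀ i' ∈ Finset.univ, v i' * z i'
          = w i' * z i' + (if i' = i then c else 0) := by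
        intro i' _
        by_cases h : i' = i
        · subst h
          simp [hvd, hcd, hm0]
          ring
        · simp [hvd, Function.update_of_ne h, h]
      rw [Finset.sum_congr rfl this, Finset.sum_add_distrib]
      simp [hsdef]
    have hle : ‖s + c‖ ≤ ‖s‖ := by
      have := hopt v hv
      rwa [ht] at this
    set t : ℂ := s + c with htd
    have h1 : (u * t).re ≤ ‖t‖ := by
      calc (u * t).re ≤ ‖u * t‖ := Complex.re_le_norm _
        _ = ‖t‖ := by rw [norm_mul, habsu, one_mul]
    have h2 : ‖s‖ ≤ (u * t).re := by
      have : (u * t).re = ‖s‖ + (u * c).re := by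
        rw [htd, mul_add, Complex.add_re, hus, Complex.ofReal_re]
      rw [this]
      linarith
    have h3 : ‖u * t‖ = ‖t‖ := by
      rw [norm_mul, habsu, one_mul]
    have heq : (u * t).re = ‖u * t‖ := by
      rw [h3]; linarith
    have him : (u * t).im = 0 := by
      have habsre : |(u * t).re| = ‖u * t‖ := by
        rw [abs_of_nonneg (le_trans (norm_nonneg s) h2), heq]
      exact (Complex.abs_re_eq_norm.mp habsre)
    have hts : ‖t‖ = ‖s‖ := by linarith
    have hut : u * t = ((‖s‖ : ℝ) : ℂ) := by
      have : u * t = ((u * t).re : ℂ) := by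
        rw [Complex.ext_iff]; simp [him]
      rw [this, heq, norm_mul, habsu, one_mul, hts]
    have hts' : t = s := by
      have := hut.trans hus.symm
      exact mul_left_cancel₀ hune this
    have hc0 : c = 0 := by
      have h : s + c = s := hts'
      have := add_eq_left.mp h
      exact this
    have : a j' = a m0 := by
      rcases mul_eq_zero.mp hc0 with h | h
      · exact sub_eq_zero.mp h
      · exact absurd h (hz i)
    rw [hm0, ha this]
  have e1 := key j (fun m hm => hj m hm)
  have e2 := key l (fun m hm => hl m hm)
  exact hjl (ha (e1.symm.trans e2))
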